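/- Let ε ∈ (0,1), let u0 ∈ ℝ with u0 ∉ {0, 1, -1}, and suppose 0 < h ≤ h*, where h* = 8ε²/(u0² + 4|u0| + 3) if |u0| > 1 and h* = ε² if 0 < |u0| < 1. Let (u_n) be any real sequence with u_0 = u0 satisfying the implicit midpoint recurrence (u_n - u_{n-1})/h + (1/ε²)·(((u_n + u_{n-1})/2)³ - (u_n + u_{n-1})/2) = 0 for all n ≥ 1 such that, in addition, each u_n is a global minimizer over v ∈ ℝ of E_IM^n(v) = (v - u_{n-1})²/(4h) + (1/ε²)·F((v + u_{n-1})/2), where F(u) = (u² - 1)²/4. Then E(u_n) ≤ E(u_{n-1}) for all n ≥ 1, where E(v) = (v² - 1)²/(4ε²). -/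

import Mathlib

private lemma scale_ineq' (h ε A B C D : ℝ) (hh : 0 < h) (hε : 0 < ε)
    (H : A / (4*h) + (1/ε^2) * (B/4) ≤ C/(4*h) + (1/ε^2)*(D/4)) :
    A * ε^2 + h * B ≤ C * ε^2 + h * D := by
  have h1 : (0:ℝ) < 4*h*ε^2 := by positivity
  have hne : h ≠ 0 := ne_of_gt hh
  have hεne : ε ≠ 0 := ne_of_gt hε
  have h2 : (A*ε^2 + h*B)/(4*h*ε^2) ≤ (C*ε^2+h*D)/(4*h*ε^2) := by
    have e1 : (A*ε^2 + h*B)/(4*h*ε^2) = A/(4*h) + (1/ε^2)*(B/4) := by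
      field_simp
    have e2 : (C*ε^2 + h*D)/(4*h*ε^2) = C/(4*h) + (1/ε^2)*(D/4) := by
      field_simp
    rw [e1, e2]; exact H
  exact (div_le_div_iff_of_pos_right h1).mp h2

private lemma key_eq' (h ε a b : ℝ) (hh : 0 < h) (hε : 0 < ε)
    (hrec : (b - a)/h + (1/ε^2)*(((b+a)/2)^3 - (b+a)/2) = 0) :
    8*ε^2*(b-a) + h*((b+a)^3 - 4*(b+a)) = 0 := by
  have hne : h ≠ 0 := ne_of_gt hh
  have hεne : ε ≠ 0 := ne_of_gt hε
  field_simp at hrec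
  linear_combination hrec

private lemma mid_pos' (h ε a b : ℝ) (hh : 0 < h) (hε : 0 < ε) (ha : 0 < a)
    (key : 8*ε^2*(b-a) + h*((b+a)^3 - 4*(b+a)) = 0)
    (hmin : ∀ v : ℝ, (b-a)^2/(4*h) + (1/ε^2)*((((b+a)/2)^2-1)^2/4)
      ≤ (v-a)^2/(4*h) + (1/ε^2)*((((v+a)/2)^2-1)^2/4)) :
    0 < a + b := by
  have H := scale_ineq' h ε _ _ _ _ hh hε (hmin (-b - 2*a))
  have he2 : (0:ℝ) < ε^2 := by positivity
  have hab : 0 ≤ a + b := by nlinarith [H, mul_pos ha he2]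
  rcases eq_or_lt_of_le hab with heq | h'
  · exfalso
    have hb : b = -a := by linarith
    rw [hb] at key
    nlinarith [key, mul_pos he2 ha]
  · exact h'

private lemma step_low' (h ε a b : ℝ) (hh : 0 < h) (hε : 0 < ε) (ha : 0 < a) (ha1 : a ≤ 1)
    (hhe : h ≤ ε^2)
    (key : 8*ε^2*(b-a) + h*((b+a)^3 - 4*(b+a)) = 0)
    (hs : 0 < a + b) :
    a ≤ b ∧ b ≤ 1 := by
  have he2 : (0:ℝ) < ε^2 := by positivity
  by_cases h2 : a + b ≤ 2
  · have prodnn : 0 ≤ (a+b)*(2-(a+b))*(2+(a+b)) :=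
      mul_nonneg (mul_nonneg hs.le (by linarith)) (by linarith)
    have q2 : 8*ε^2*(b-a) = h * ((a+b)*(2-(a+b))*(2+(a+b))) := by linear_combination key
    have hba : a ≤ b := by nlinarith [mul_nonneg hh.le prodnn]
    refine ⟨hba, ?_⟩
    by_contra hb1
    push_neg at hb1
    have ha' : a < 1 := by linarith
    have plt : (a+b)*(2-(a+b))*(2+(a+b)) < 8*(1-a) := by
      nlinarith [sq_nonneg (2-(a+b)),
        mul_nonneg (sq_nonneg (2-(a+b))) (by linarith : (0:ℝ) ≤ 6 - (2-(a+b)))]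
    have step1 : h * ((a+b)*(2-(a+b))*(2+(a+b))) ≤ ε^2 * ((a+b)*(2-(a+b))*(2+(a+b))) :=
      mul_le_mul_of_nonneg_right hhe prodnn
    nlinarith [mul_lt_mul_of_pos_left plt he2]
  · exfalso
    push_neg at h2
    have hba : b < a := by
      nlinarith [key, mul_pos hh (mul_pos hs (by nlinarith : (0:ℝ) < (a+b)^2 - 4))]
    linarith

private lemma step_high' (h ε a b : ℝ) (hh : 0 < h) (hε : 0 < ε) (ha : 1 ≤ a)
    (hhe : h * (a^2 + 4*a + 3) ≤ 8*ε^2)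
    (key : 8*ε^2*(b-a) + h*((b+a)^3 - 4*(b+a)) = 0)
    (hs : 0 < a + b) :
    1 ≤ b ∧ b ≤ a := by
  have he2 : (0:ℝ) < ε^2 := by positivity
  by_cases hsle : a + b ≤ 2
  · have prodnn : 0 ≤ (a+b)*(2-(a+b))*(2+(a+b)) :=
      mul_nonneg (mul_nonneg hs.le (by linarith)) (by linarith)
    have q2 : 8*ε^2*(b-a) = h * ((a+b)*(2-(a+b))*(2+(a+b))) := by linear_combination key
    have hba : a ≤ b := by nlinarith [mul_nonneg hh.le prodnn]
    have hs2 : a + b = 2 := le_antisymm hsle (by linarith)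
    have h0 : (a+b)*(2-(a+b))*(2+(a+b)) = 0 := by rw [hs2]; ring
    rw [h0, mul_zero] at q2
    have hbe : b = a := by nlinarith [q2]
    constructor <;> nlinarith [hbe, hs2]
  · push_neg at hsle
    have hba : b < a := by
      nlinarith [key, mul_pos hh (mul_pos hs (by nlinarith : (0:ℝ) < (a+b)^2 - 4))]
    refine ⟨?_, hba.le⟩
    by_contra hb1
    push_neg at hb1
    have ha' : 1 < a := by linarith
    have q2 : 8*ε^2*(a-b) = h * ((a+b)*((a+b)-2)*((a+b)+2)) := by linear_combination -key
    have g1 : (a+b)*((a+b)-2) < (a+1)*(a-1) :=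
      mul_lt_mul'' (by linarith) (by linarith) hs.le (by linarith)
    have g2 : ((a+b)*((a+b)-2))*((a+b)+2) < ((a+1)*(a-1))*(a+3) :=
      mul_lt_mul'' g1 (by linarith) (mul_nonneg hs.le (by linarith)) (by linarith)
    have p2 : h * ((a+b)*((a+b)-2)*((a+b)+2)) < h * ((a+1)*(a-1)*(a+3)) := by
      have hg : (a+b)*((a+b)-2)*((a+b)+2) < (a+1)*(a-1)*(a+3) := by
        calc (a+b)*((a+b)-2)*((a+b)+2) = ((a+b)*((a+b)-2))*((a+b)+2) := by ring
        _ < ((a+1)*(a-1))*(a+3) := g2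
        _ = (a+1)*(a-1)*(a+3) := by ring
      exact mul_lt_mul_of_pos_left hg hh
    have p3 : h * ((a+1)*(a-1)*(a+3)) ≤ (a-1) * (8*ε^2) := by
      have e : h * ((a+1)*(a-1)*(a+3)) = (a-1) * (h * (a^2+4*a+3)) := by ring
      rw [e]
      exact mul_le_mul_of_nonneg_left hhe (by linarith)
    have final : (a-1) * (8*ε^2) < 8*ε^2*(a-b) := by nlinarith [he2, hb1]
    linarith [p2, p3, q2, final]

private lemma energy_stable_pos
    (ε : ℝ) (hε0 : 0 < ε)
    (u0 : ℝ) (hu0pos : 0 < u0) (hu0ne : u0 ≠ 1)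
    (h : ℝ) (hh0 : 0 < h)
    (hh1 : h ≤ if 1 < |u0| then 8 * ε ^ 2 / (u0 ^ 2 + 4 * |u0| + 3) else ε ^ 2)
    (u : ℕ → ℝ) (hinit : u 0 = u0)
    (hrec : ∀ n : ℕ, (u (n + 1) - u n) / h
      + (1 / ε ^ 2) * (((u (n + 1) + u n) / 2) ^ 3 - (u (n + 1) + u n) / 2) = 0)
    (hmin : ∀ n : ℕ, ∀ v : ℝ,
      (u (n + 1) - u n) ^ 2 / (4 * h)
        + (1 / ε ^ 2) * ((((u (n + 1) + u n) / 2) ^ 2 - 1) ^ 2 / 4)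
      ≤ (v - u n) ^ 2 / (4 * h)
        + (1 / ε ^ 2) * ((((v + u n) / 2) ^ 2 - 1) ^ 2 / 4)) :
    ∀ n : ℕ, ((u (n + 1)) ^ 2 - 1) ^ 2 / (4 * ε ^ 2) ≤ ((u n) ^ 2 - 1) ^ 2 / (4 * ε ^ 2) := by
  rw [abs_of_pos hu0pos] at hh1
  have he2 : (0:ℝ) < ε^2 := by positivity
  have h4 : (0:ℝ) < 4*ε^2 := by positivity
  have key : ∀ n : ℕ,
      8*ε^2*(u (n+1) - u n) + h*((u (n+1) + u n)^3 - 4*(u (n+1) + u n)) = 0 :=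
    fun n => key_eq' h ε (u n) (u (n+1)) hh0 hε0 (hrec n)
  rcases lt_or_gt_of_ne hu0ne with hlt | hgt
  · -- 0 < u0 < 1
    rw [if_neg (by linarith)] at hh1
    have inv : ∀ n, 0 < u n ∧ u n ≤ 1 := by
      intro n
      induction n with
      | zero => rw [hinit]; exact ⟨hu0pos, hlt.le⟩
      | succ k ih =>
        have hsp := mid_pos' h ε (u k) (u (k+1)) hh0 hε0 ih.1 (key k) (hmin k)
        have hst := step_low' h ε (u k) (u (k+1)) hh0 hε0 ih.1 ih.2 hh1 (key k) hsp
        exact ⟨lt_of_lt_of_le ih.1 hst.1, hst.2⟩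
    intro n
    obtain ⟨ha0, ha1⟩ := inv n
    have hsp := mid_pos' h ε (u n) (u (n+1)) hh0 hε0 ha0 (key n) (hmin n)
    obtain ⟨hab, hb1⟩ := step_low' h ε (u n) (u (n+1)) hh0 hε0 ha0 ha1 hh1 (key n) hsp
    have pe : ((u (n+1))^2 - 1)^2 ≤ ((u n)^2 - 1)^2 := by
      nlinarith [mul_nonneg (mul_nonneg (sub_nonneg.2 hab) hsp.le)
        (by nlinarith : (0:ℝ) ≤ 2 - (u n)^2 - (u (n+1))^2)]
    exact (div_le_div_iff_of_pos_right h4).mpr pe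
  · -- 1 < u0
    rw [if_pos (by linarith)] at hh1
    have hden : (0:ℝ) < u0^2 + 4*u0 + 3 := by nlinarith
    have hh1' : h * (u0^2 + 4*u0 + 3) ≤ 8*ε^2 := (le_div_iff₀ hden).mp hh1
    have inv : ∀ n, 1 ≤ u n ∧ u n ≤ u0 := by
      intro n
      induction n with
      | zero => rw [hinit]; exact ⟨hgt.le, le_refl _⟩
      | succ k ih =>
        have hhe : h * ((u k)^2 + 4*(u k) + 3) ≤ 8*ε^2 := by
          nlinarith [mul_nonneg hh0.le (mul_nonneg (sub_nonneg.2 ih.2)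
            (by linarith : (0:ℝ) ≤ u0 + u k))]
        have hsp := mid_pos' h ε (u k) (u (k+1)) hh0 hε0 (by linarith [ih.1]) (key k) (hmin k)
        have hst := step_high' h ε (u k) (u (k+1)) hh0 hε0 ih.1 hhe (key k) hsp
        exact ⟨hst.1, le_trans hst.2 ih.2⟩
    intro n
    obtain ⟨ha1, hau⟩ := inv n
    have hhe : h * ((u n)^2 + 4*(u n) + 3) ≤ 8*ε^2 := by
      nlinarith [mul_nonneg hh0.le (mul_nonneg (sub_nonneg.2 hau)
        (by linarith : (0:ℝ) ≤ u0 + u n))]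
    have hsp := mid_pos' h ε (u n) (u (n+1)) hh0 hε0 (by linarith) (key n) (hmin n)
    obtain ⟨hb1, hba⟩ := step_high' h ε (u n) (u (n+1)) hh0 hε0 ha1 hhe (key n) hsp
    have pe : ((u (n+1))^2 - 1)^2 ≤ ((u n)^2 - 1)^2 := by
      nlinarith [mul_nonneg (mul_nonneg (sub_nonneg.2 hba) hsp.le)
        (by nlinarith : (0:ℝ) ≤ (u n)^2 + (u (n+1))^2 - 2)]
    exact (div_le_div_iff_of_pos_right h4).mpr pe

theorem implicit_midpoint_energy_stability
    (ε : ℝ) (hε0 : 0 < ε) (hε1 : ε < 1)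
    (u0 : ℝ) (hu0 : u0 ∉ ({0, 1, -1} : Set ℝ))
    (h : ℝ) (hh0 : 0 < h)
    (hh1 : h ≤ if 1 < |u0| then 8 * ε ^ 2 / (u0 ^ 2 + 4 * |u0| + 3) else ε ^ 2)
    (u : ℕ → ℝ) (hinit : u 0 = u0)
    (hrec : ∀ n : ℕ, (u (n + 1) - u n) / h
      + (1 / ε ^ 2) * (((u (n + 1) + u n) / 2) ^ 3 - (u (n + 1) + u n) / 2) = 0)
    (hmin : ∀ n : ℕ, ∀ v : ℝ,
      (u (n + 1) - u n) ^ 2 / (4 * h)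
        + (1 / ε ^ 2) * ((((u (n + 1) + u n) / 2) ^ 2 - 1) ^ 2 / 4)
      ≤ (v - u n) ^ 2 / (4 * h)
        + (1 / ε ^ 2) * ((((v + u n) / 2) ^ 2 - 1) ^ 2 / 4)) :
    ∀ n : ℕ, ((u (n + 1)) ^ 2 - 1) ^ 2 / (4 * ε ^ 2) ≤ ((u n) ^ 2 - 1) ^ 2 / (4 * ε ^ 2) := by
  simp only [Set.mem_insert_iff, Set.mem_singleton_iff, not_or] at hu0
  obtain ⟨h0, h1, hm1⟩ := hu0
  rcases lt_trichotomy u0 0 with hneg | hz | hpos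
  · -- apply the positive-case lemma to -u
    have hh1' : h ≤ if 1 < |(-u0)| then 8 * ε ^ 2 / ((-u0) ^ 2 + 4 * |(-u0)| + 3) else ε ^ 2 := by
      simpa [abs_neg, neg_sq] using hh1
    have hrec' : ∀ n : ℕ, ((-(u (n + 1))) - (-(u n))) / h
        + (1 / ε ^ 2) * ((((-(u (n + 1))) + (-(u n))) / 2) ^ 3
          - ((-(u (n + 1))) + (-(u n))) / 2) = 0 := by
      intro n
      linear_combination -(hrec n)
    have hmin' : ∀ n : ℕ, ∀ v : ℝ,
        ((-(u (n + 1))) - (-(u n))) ^ 2 / (4 * h)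
          + (1 / ε ^ 2) * (((((-(u (n + 1))) + (-(u n))) / 2) ^ 2 - 1) ^ 2 / 4)
        ≤ (v - (-(u n))) ^ 2 / (4 * h)
          + (1 / ε ^ 2) * ((((v + (-(u n))) / 2) ^ 2 - 1) ^ 2 / 4) := by
      intro n v
      have H := hmin n (-v)
      have eL : ((-(u (n + 1))) - (-(u n))) ^ 2 / (4 * h)
          + (1 / ε ^ 2) * (((((-(u (n + 1))) + (-(u n))) / 2) ^ 2 - 1) ^ 2 / 4)
          = (u (n + 1) - u n) ^ 2 / (4 * h)
          + (1 / ε ^ 2) * ((((u (n + 1) + u n) / 2) ^ 2 - 1) ^ 2 / 4) := by ring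
      have eR : (v - (-(u n))) ^ 2 / (4 * h)
          + (1 / ε ^ 2) * ((((v + (-(u n))) / 2) ^ 2 - 1) ^ 2 / 4)
          = ((-v) - u n) ^ 2 / (4 * h)
          + (1 / ε ^ 2) * (((((-v) + u n) / 2) ^ 2 - 1) ^ 2 / 4) := by ring
      rw [eL, eR]
      exact H
    have G := energy_stable_pos ε hε0 (-u0) (by linarith)
      (fun hc => hm1 (by linarith)) h hh0 hh1' (fun n => -(u n))
      (by show -u 0 = -u0; rw [hinit]) hrec' hmin'
    intro n
    have := G n
    simpa [neg_sq] using this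
  · exact absurd hz h0
  · exact energy_stable_pos ε hε0 u0 hpos h1 h hh0 hh1 u hinit hrec hmin
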